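/- arXiv:2012.11035 — 5 statements merged into one kernel-verified Lean document; each statement's English description precedes it below -/
import Mathlib

section
/- Let D, W ⊆ ℝ^d, let K be a Markov kernel from D to probability measures on W, and let γ ≥ 1. Then the contraction coefficient of K under the E_γ-divergence satisfies η_γ(K) = sup_{w₁,w₂ ∈ D} E_γ(K(w₁)‖K(w₂)). -/
open MeasureTheory ProbabilityTheory Real

/-- The hockey-stick (`E_γ`) divergence: `E_γ(μ‖ν) = sup_A [μ(A) − γ·ν(A)]`,
the supremum over all measurable sets `A`. -/
noncomputable def Egamma {α : Type*} [MeasurableSpace α] (γ : ℝ) (μ ν : Measure α) : ℝ :=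
  ⨆ (A : Set α) (_ : MeasurableSet A), ((μ A).toReal - γ * (ν A).toReal)

/-- The contraction coefficient of a kernel `K` under the `E_γ`-divergence:
the supremum of `E_γ(μK‖νK)/E_γ(μ‖ν)` over pairs of probability measures with
`E_γ(μ‖ν) ≠ 0`, where `μK` is the push-forward `μK = ∫ K(w) dμ(w)`. -/
noncomputable def etaGamma {α β : Type*} [MeasurableSpace α] [MeasurableSpace β]
    (γ : ℝ) (K : α → Measure β) : ℝ :=
  ⨆ p : {p : Measure α × Measure α //
      IsProbabilityMeasure p.1 ∧ IsProbabilityMeasure p.2 ∧ Egamma γ p.1 p.2 ≠ 0},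
    Egamma γ (p.1.1.bind K) (p.1.2.bind K) / Egamma γ p.1.1 p.1.2

section Aux
variable {α : Type*} [MeasurableSpace α] {γ : ℝ} {μ ν : Measure α}

lemma prob_toReal_le_one [IsProbabilityMeasure μ] (A : Set α) : (μ A).toReal ≤ 1 := by
  have h : μ A ≤ 1 := prob_le_one
  simpa using ENNReal.toReal_mono ENNReal.one_ne_top h

lemma Egamma_le {b : ℝ} (hb : 0 ≤ b)
    (h : ∀ A : Set α, MeasurableSet A → (μ A).toReal - γ * (ν A).toReal ≤ b) :
    Egamma γ μ ν ≤ b := by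
  refine Real.iSup_le (fun A => ?_) hb
  by_cases hA : MeasurableSet A
  · exact Real.iSup_le (fun _ => h A hA) hb
  · haveI : IsEmpty (MeasurableSet A) := ⟨hA⟩
    rw [Real.iSup_of_isEmpty]; exact hb

lemma le_Egamma [IsProbabilityMeasure μ] (hγ : 0 ≤ γ) {A : Set α} (hA : MeasurableSet A) :
    (μ A).toReal - γ * (ν A).toReal ≤ Egamma γ μ ν := by
  have hbdd : BddAbove (Set.range fun A : Set α =>
      ⨆ (_ : MeasurableSet A), ((μ A).toReal - γ * (ν A).toReal)) := by
    refine ⟨1, fun x hx => ?_⟩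
    obtain ⟨B, rfl⟩ := hx
    dsimp only
    by_cases hB : MeasurableSet B
    · haveI : Nonempty (MeasurableSet B) := ⟨hB⟩
      rw [ciSup_const]
      have h1 : (μ B).toReal ≤ 1 := prob_toReal_le_one B
      have h2 : 0 ≤ γ * (ν B).toReal := mul_nonneg hγ ENNReal.toReal_nonneg
      linarith
    · haveI : IsEmpty (MeasurableSet B) := ⟨hB⟩
      rw [Real.iSup_of_isEmpty]; norm_num
  haveI : Nonempty (MeasurableSet A) := ⟨hA⟩
  calc (μ A).toReal - γ * (ν A).toReal
      = ⨆ (_ : MeasurableSet A), ((μ A).toReal - γ * (ν A).toReal) := ciSup_const.symm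
    _ ≤ Egamma γ μ ν := le_ciSup hbdd A

lemma Egamma_nonneg [IsProbabilityMeasure μ] (hγ : 0 ≤ γ) : 0 ≤ Egamma γ μ ν := by
  have := le_Egamma (μ := μ) (ν := ν) hγ MeasurableSet.empty
  simpa using this

lemma Egamma_le_one [IsProbabilityMeasure μ] (hγ : 0 ≤ γ) : Egamma γ μ ν ≤ 1 :=
  Egamma_le zero_le_one fun A _ => by
    have h1 : (μ A).toReal ≤ 1 := prob_toReal_le_one A
    have h2 : 0 ≤ γ * (ν A).toReal := mul_nonneg hγ ENNReal.toReal_nonneg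
    linarith

lemma Egamma_self_nonpos [IsProbabilityMeasure μ] (hγ : 1 ≤ γ) : Egamma γ μ μ ≤ 0 :=
  Egamma_le le_rfl fun A _ => by nlinarith [ENNReal.toReal_nonneg (a := μ A)]

lemma key_estimate (μ ν : Measure α) [IsProbabilityMeasure μ] [IsProbabilityMeasure ν]
    {c : ℝ} (hγ : 1 ≤ γ) (hc0 : 0 ≤ c) (f : α → ℝ) (hf : Measurable f)
    (hf0 : ∀ w, 0 ≤ f w) (hf1 : ∀ w, f w ≤ 1)
    (hfc : ∀ w1 w2, f w1 - γ * f w2 ≤ c) :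
    ∫ w, f w ∂μ - γ * ∫ w, f w ∂ν ≤ c * Egamma γ μ ν := by
  have hγ0 : (0:ℝ) < γ := lt_of_lt_of_le one_pos hγ
  haveI : Nonempty α := by
    by_contra h
    rw [not_nonempty_iff] at h
    have h1 := measure_univ (μ := μ)
    rw [Set.univ_eq_empty_iff.2 h, measure_empty] at h1
    exact zero_ne_one h1
  -- infimum of f
  set m := ⨅ w, f w with hm
  have hbb : BddBelow (Set.range f) := ⟨0, by rintro x ⟨w, rfl⟩; exact hf0 w⟩
  have hm0 : 0 ≤ m := le_ciInf hf0
  have hmf : ∀ w, m ≤ f w := fun w => ciInf_le hbb w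
  have hfub : ∀ w, f w ≤ c + γ * m := by
    intro w
    have h1 : (f w - c) / γ ≤ m := by
      refine le_ciInf fun w2 => ?_
      rw [div_le_iff₀ hγ0]
      nlinarith [hfc w w2]
    rw [div_le_iff₀ hγ0] at h1
    nlinarith
  -- the scaled measure γ • ν
  set ν' : Measure α := (ENNReal.ofReal γ) • ν with hν'
  haveI : IsFiniteMeasure ν' := by
    constructor
    rw [hν', Measure.smul_apply, smul_eq_mul, measure_univ, mul_one]
    exact ENNReal.ofReal_lt_top
  -- integrability of bounded measurable functions
  have hfi : ∀ (ρ : Measure α) [IsFiniteMeasure ρ], Integrable f ρ := by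
    intro ρ _
    refine (integrable_const 1).mono' hf.aestronglyMeasurable (ae_of_all _ fun w => ?_)
    rw [Real.norm_eq_abs, abs_of_nonneg (hf0 w)]; exact hf1 w
  -- Hahn decomposition for μ vs γ•ν
  obtain ⟨s, hs, h1, h2⟩ := hahn_decomposition (μ := μ) (ν := ν')
  set T : ℝ := (μ s).toReal - γ * (ν s).toReal with hT
  have hν's : ∀ B : Set α, (ν' B).toReal = γ * (ν B).toReal := by
    intro B
    rw [hν', Measure.smul_apply, smul_eq_mul, ENNReal.toReal_mul,
      ENNReal.toReal_ofReal (le_of_lt hγ0)]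
  have hγint : ∀ B : Set α, ∫ w in B, f w ∂ν' = γ * ∫ w in B, f w ∂ν := by
    intro B
    rw [hν', Measure.restrict_smul, integral_smul_measure,
      ENNReal.toReal_ofReal (le_of_lt hγ0), smul_eq_mul]
  -- piece on sᶜ : ∫_{sᶜ} (f - m) dμ ≤ ∫_{sᶜ} (f - m) dν'
  have hleC : μ.restrict sᶜ ≤ ν'.restrict sᶜ := by
    rw [Measure.le_iff]
    intro t ht
    rw [Measure.restrict_apply ht, Measure.restrict_apply ht]
    exact h2 _ (ht.inter hs.compl) Set.inter_subset_right
  have pieceC : ∫ w in sᶜ, (f w - m) ∂μ ≤ ∫ w in sᶜ, (f w - m) ∂ν' := by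
    refine integral_mono_measure hleC (ae_of_all _ fun w => by simp [hmf w]) ?_
    exact ((hfi _).sub (integrable_const m))
  -- piece on s : ∫_s (c + γm - f) dν' ≤ ∫_s (c + γm - f) dμ
  have hleS : ν'.restrict s ≤ μ.restrict s := by
    rw [Measure.le_iff]
    intro t ht
    rw [Measure.restrict_apply ht, Measure.restrict_apply ht]
    exact h1 _ (ht.inter hs) Set.inter_subset_right
  have pieceS : ∫ w in s, (c + γ * m - f w) ∂ν' ≤ ∫ w in s, (c + γ * m - f w) ∂μ := by
    refine integral_mono_measure hleS (ae_of_all _ fun w => by simp [hfub w]) ?_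
    exact ((integrable_const _).sub (hfi _))
  -- expand the piece integrals
  have expand : ∀ (ρ : Measure α) [IsFiniteMeasure ρ], ∀ B : Set α,
      (∫ w in B, (f w - m) ∂ρ = ∫ w in B, f w ∂ρ - (ρ B).toReal * m) ∧
      (∫ w in B, (c + γ * m - f w) ∂ρ = (ρ B).toReal * (c + γ * m) - ∫ w in B, f w ∂ρ) := by
    intro ρ _ B
    constructor
    · rw [integral_sub (hfi _) (integrable_const m), setIntegral_const, smul_eq_mul, measureReal_def]
    · rw [integral_sub (integrable_const _) (hfi _), setIntegral_const, smul_eq_mul, measureReal_def]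
  -- totals
  have htotμ : ∫ w in s, f w ∂μ + ∫ w in sᶜ, f w ∂μ = ∫ w, f w ∂μ :=
    integral_add_compl hs (hfi _)
  have htotν : ∫ w in s, f w ∂ν + ∫ w in sᶜ, f w ∂ν = ∫ w, f w ∂ν :=
    integral_add_compl hs (hfi _)
  -- complement measures
  have hcomplμ : (μ sᶜ).toReal = 1 - (μ s).toReal := by
    rw [measure_compl hs (measure_ne_top _ _), measure_univ,
      ENNReal.toReal_sub_of_le prob_le_one ENNReal.one_ne_top, ENNReal.toReal_one]
  have hcomplν : (ν sᶜ).toReal = 1 - (ν s).toReal := by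
    rw [measure_compl hs (measure_ne_top _ _), measure_univ,
      ENNReal.toReal_sub_of_le prob_le_one ENNReal.one_ne_top, ENNReal.toReal_one]
  -- bound on T
  have hT1 : T ≤ 1 := by
    have := (ENNReal.toReal_mono ENNReal.one_ne_top (prob_le_one (μ := μ) (s := s)))
    simp only [ENNReal.toReal_one] at this
    nlinarith [ENNReal.toReal_nonneg (a := ν s)]
  have hTE : T ≤ Egamma γ μ ν := le_Egamma (le_of_lt hγ0) hs
  have hE0 : 0 ≤ Egamma γ μ ν := by
    have := le_Egamma (μ := μ) (ν := ν) (le_of_lt hγ0) MeasurableSet.empty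
    simpa using this
  -- put it together
  obtain ⟨eC1, -⟩ := expand μ sᶜ
  obtain ⟨eC2, -⟩ := expand ν' sᶜ
  obtain ⟨-, eS1⟩ := expand μ s
  obtain ⟨-, eS2⟩ := expand ν' s
  rw [eC1, eC2, hγint sᶜ, hν' , hν's sᶜ] at pieceC
  rw [eS1, eS2, hγint s, hν's s] at pieceS
  -- pieceC : ∫_{sᶜ} f dμ - μ(sᶜ) m ≤ γ ∫_{sᶜ} f dν - γ ν(sᶜ) m
  -- pieceS : γ ν(s) (c+γm) - γ ∫_s f dν ≤ μ(s)(c+γm) - ∫_s f dμ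
  have hcE : c * T ≤ c * Egamma γ μ ν := mul_le_mul_of_nonneg_left hTE hc0
  have key1 : (∫ w in s, f w ∂μ) - γ * ∫ w in s, f w ∂ν ≤ T * (c + γ * m) := by
    rw [hT]; linarith [pieceS]
  have key2 : (∫ w in sᶜ, f w ∂μ) - γ * ∫ w in sᶜ, f w ∂ν
      ≤ (1 - (μ s).toReal) * m - γ * ((1 - (ν s).toReal) * m) := by
    rw [hcomplμ, hcomplν] at pieceC; linarith [pieceC]
  have hint : 0 ≤ m * (γ - 1) * (1 - T) :=
    mul_nonneg (mul_nonneg hm0 (by linarith)) (by linarith)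
  rw [hT] at key1 hint hcE
  have hsum : ∫ (w : α), f w ∂μ - γ * ∫ (w : α), f w ∂ν
      ≤ ((μ s).toReal - γ * (ν s).toReal) * (c + γ * m)
        + ((1 - (μ s).toReal) * m - γ * ((1 - (ν s).toReal) * m)) := by
    rw [← htotμ, ← htotν]; linarith [key1, key2]
  nlinarith [hsum, hcE, hint]

end Aux

section Bind
variable {α β : Type*} [MeasurableSpace α] [MeasurableSpace β] {γ : ℝ}
  {K : α → Measure β}

lemma bind_isProbabilityMeasure (μ : Measure α) [IsProbabilityMeasure μ]
    (hKprob : ∀ w, IsProbabilityMeasure (K w)) (hKmeas : Measurable K) :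
    IsProbabilityMeasure (μ.bind K) := by
  constructor
  rw [Measure.bind_apply MeasurableSet.univ hKmeas.aemeasurable,
    lintegral_congr (fun w => (hKprob w).measure_univ), lintegral_one, measure_univ]

lemma bind_apply_toReal (μ : Measure α) [IsProbabilityMeasure μ]
    (hKprob : ∀ w, IsProbabilityMeasure (K w)) (hKmeas : Measurable K)
    {A : Set β} (hA : MeasurableSet A) :
    ((μ.bind K) A).toReal = ∫ w, ((K w) A).toReal ∂μ := by
  have hm : Measurable fun w => (K w) A := (Measure.measurable_coe hA).comp hKmeas
  rw [Measure.bind_apply hA hKmeas.aemeasurable,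
    ← integral_toReal hm.aemeasurable
      (ae_of_all _ fun w => by haveI := hKprob w; exact measure_lt_top _ _)]

lemma Egamma_bind_le (μ ν : Measure α) [IsProbabilityMeasure μ] [IsProbabilityMeasure ν]
    (hKprob : ∀ w, IsProbabilityMeasure (K w)) (hKmeas : Measurable K)
    {c : ℝ} (hγ : 1 ≤ γ) (hc0 : 0 ≤ c)
    (hc : ∀ w1 w2 : α, Egamma γ (K w1) (K w2) ≤ c) :
    Egamma γ (μ.bind K) (ν.bind K) ≤ c * Egamma γ μ ν := by
  have hγ0 : (0:ℝ) ≤ γ := le_trans zero_le_one hγ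
  refine Egamma_le (mul_nonneg hc0 (Egamma_nonneg hγ0)) fun A hA => ?_
  rw [bind_apply_toReal μ hKprob hKmeas hA, bind_apply_toReal ν hKprob hKmeas hA]
  refine key_estimate μ ν hγ hc0 _
    ((show Measurable fun w => (K w) A from (Measure.measurable_coe hA).comp hKmeas).ennreal_toReal)
    (fun w => ENNReal.toReal_nonneg)
    (fun w => by
      haveI := hKprob w
      simpa using ENNReal.toReal_mono ENNReal.one_ne_top (prob_le_one (μ := K w) (s := A)))
    (fun w1 w2 => by
      haveI := hKprob w1
      exact le_trans (le_Egamma hγ0 hA) (hc w1 w2))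
end Bind

/-- For `D, W ⊆ ℝ^d`, a Markov kernel `K` from `D` to probability
measures on `W`, and `γ ≥ 1`, the contraction coefficient of `K` under `E_γ` equals
`sup_{w₁,w₂ ∈ D} E_γ(K(w₁)‖K(w₂))`. -/
theorem contraction_coefficient_Egamma {d : ℕ}
    (D W : Set (EuclideanSpace ℝ (Fin d)))
    (K : ↥D → Measure ↥W)
    (hKprob : ∀ w, IsProbabilityMeasure (K w))
    (hKmeas : Measurable K)
    (γ : ℝ) (hγ : 1 ≤ γ) :
    etaGamma γ K = ⨆ p : ↥D × ↥D, Egamma γ (K p.1) (K p.2) := by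
  have hγ0 : (0:ℝ) ≤ γ := le_trans zero_le_one hγ
  set R : ℝ := ⨆ p : ↥D × ↥D, Egamma γ (K p.1) (K p.2) with hR
  have hR0 : 0 ≤ R := Real.iSup_nonneg fun p => by
    haveI := hKprob p.1; exact Egamma_nonneg hγ0
  have hRbdd : BddAbove (Set.range fun p : ↥D × ↥D => Egamma γ (K p.1) (K p.2)) := by
    refine ⟨1, fun x hx => ?_⟩
    obtain ⟨p, rfl⟩ := hx
    haveI := hKprob p.1
    exact Egamma_le_one hγ0
  have hle_R : ∀ p : ↥D × ↥D, Egamma γ (K p.1) (K p.2) ≤ R := fun p => le_ciSup hRbdd p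
  -- bound on each ratio in etaGamma
  have hratio : ∀ q : {p : Measure ↥D × Measure ↥D //
      IsProbabilityMeasure p.1 ∧ IsProbabilityMeasure p.2 ∧ Egamma γ p.1 p.2 ≠ 0},
      Egamma γ (q.1.1.bind K) (q.1.2.bind K) / Egamma γ q.1.1 q.1.2 ≤ R := by
    rintro ⟨⟨μ, ν⟩, hμ, hν, hE⟩
    haveI := hμ; haveI := hν
    have hEpos : 0 < Egamma γ μ ν := lt_of_le_of_ne (Egamma_nonneg hγ0) (Ne.symm hE)
    rw [div_le_iff₀ hEpos]
    exact Egamma_bind_le μ ν hKprob hKmeas hγ hR0 (fun w1 w2 => hle_R (w1, w2))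
  refine le_antisymm (Real.iSup_le hratio hR0) ?_
  -- reverse direction
  have hηbdd : BddAbove (Set.range fun q : {p : Measure ↥D × Measure ↥D //
      IsProbabilityMeasure p.1 ∧ IsProbabilityMeasure p.2 ∧ Egamma γ p.1 p.2 ≠ 0} =>
      Egamma γ (q.1.1.bind K) (q.1.2.bind K) / Egamma γ q.1.1 q.1.2) := by
    refine ⟨1, fun x hx => ?_⟩
    obtain ⟨⟨⟨μ, ν⟩, hμ, hν, hE⟩, rfl⟩ := hx
    haveI := hμ; haveI := hν
    have hEpos : 0 < Egamma γ μ ν := lt_of_le_of_ne (Egamma_nonneg hγ0) (Ne.symm hE)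
    dsimp only
    rw [div_le_one hEpos]
    have := Egamma_bind_le μ ν hKprob hKmeas hγ zero_le_one
      (fun w1 w2 => by haveI := hKprob w1; exact Egamma_le_one hγ0)
    simpa using this
  have hη0 : 0 ≤ etaGamma γ K := by
    refine Real.iSup_nonneg fun q => ?_
    obtain ⟨⟨μ, ν⟩, hμ, hν, hE⟩ := q
    haveI := hμ; haveI := hν
    haveI := bind_isProbabilityMeasure (K := K) μ hKprob hKmeas
    exact div_nonneg (Egamma_nonneg hγ0) (Egamma_nonneg hγ0)
  refine Real.iSup_le (fun p => ?_) hη0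
  obtain ⟨w1, w2⟩ := p
  by_cases hw : w1 = w2
  · subst hw
    haveI := hKprob w1
    exact le_trans (Egamma_self_nonpos hγ) hη0
  · -- use Dirac measures
    have hA : MeasurableSet ({w1} : Set ↥D) := measurableSet_singleton w1
    have hEδ : Egamma γ (Measure.dirac w1) (Measure.dirac w2) = 1 := by
      refine le_antisymm (Egamma_le_one hγ0) ?_
      have h := le_Egamma (μ := Measure.dirac w1) (ν := Measure.dirac w2) hγ0 hA
      have h1 : (Measure.dirac w1 : Measure ↥D) {w1} = 1 := by
        simp [Measure.dirac_apply]
      have h2 : (Measure.dirac w2 : Measure ↥D) {w1} = 0 := by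
        rw [Measure.dirac_apply' _ hA]
        simp [Ne.symm hw]
      rw [h1, h2] at h
      simpa using h
    refine le_trans ?_ (le_ciSup hηbdd
      ⟨(Measure.dirac w1, Measure.dirac w2), by
        refine ⟨inferInstance, inferInstance, ?_⟩
        rw [hEδ]; exact one_ne_zero⟩)
    dsimp only
    rw [Measure.dirac_bind hKmeas, Measure.dirac_bind hKmeas, hEδ, div_one]
end

section
/- Let m₁, m₂ ∈ ℝ^d with m₁ ≠ m₂, let σ > 0 and γ ≥ 1, and set β := ‖m₂ − m₁‖/σ. Then E_γ(N(m₁, σ²I_d) ‖ N(m₂, σ²I_d)) = Q(log γ / β − β/2) − γ · Q(log γ / β + β/2). -/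
open MeasureTheory ProbabilityTheory Real
open scoped ENNReal NNReal

/-- The Gaussian measure `N(m, σ²I_d)` on `ℝ^d` (Euclidean space), realized as the
product of `d` one-dimensional Gaussians with variance `σ²`. -/
noncomputable def gaussE {d : ℕ} (m : EuclideanSpace ℝ (Fin d)) (σ : ℝ) :
    Measure (EuclideanSpace ℝ (Fin d)) :=
  Measure.map (MeasurableEquiv.toLp 2 (Fin d → ℝ))
    (Measure.pi fun i => gaussianReal (m i) (Real.toNNReal (σ ^ 2)))

/-- The standard Gaussian tail function `Q(a) = (1/√(2π)) ∫_a^∞ e^{−u²/2} du`. -/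
noncomputable def Qfun (a : ℝ) : ℝ :=
  (1 / Real.sqrt (2 * Real.pi)) * ∫ u in Set.Ici a, Real.exp (-u ^ 2 / 2)

/-! ### Auxiliary lemmas -/

lemma Egamma_eq_of_withDensity {α : Type*} [MeasurableSpace α] (γ : ℝ) (hγ : 0 ≤ γ)
    (μ ν : Measure α) [IsFiniteMeasure μ] [IsFiniteMeasure ν]
    {h : α → ℝ≥0∞} (hh : Measurable h) (hμν : μ = ν.withDensity h) :
    Egamma γ μ ν = (μ {x | ENNReal.ofReal γ ≤ h x}).toReal
      - γ * (ν {x | ENNReal.ofReal γ ≤ h x}).toReal := by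
  set A : Set α := {x | ENNReal.ofReal γ ≤ h x} with hAdef
  have hA : MeasurableSet A := measurableSet_le measurable_const hh
  have claim1 : ∀ S : Set α, MeasurableSet S → S ⊆ A →
      γ * (ν S).toReal ≤ (μ S).toReal := by
    intro S hS hSA
    have h1 : ENNReal.ofReal γ * ν S ≤ μ S := by
      rw [hμν, withDensity_apply _ hS, ← setLIntegral_const]
      exact setLIntegral_mono' hS fun x hx => hSA hx
    have h2 : (ENNReal.ofReal γ * ν S).toReal = γ * (ν S).toReal := by
      rw [ENNReal.toReal_mul, ENNReal.toReal_ofReal hγ]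
    rw [← h2]
    exact ENNReal.toReal_mono (measure_ne_top _ _) h1
  have claim2 : ∀ S : Set α, MeasurableSet S → S ⊆ Aᶜ →
      (μ S).toReal ≤ γ * (ν S).toReal := by
    intro S hS hSA
    have h1 : μ S ≤ ENNReal.ofReal γ * ν S := by
      rw [hμν, withDensity_apply _ hS, ← setLIntegral_const]
      exact setLIntegral_mono' hS fun x hx => le_of_not_ge (hSA hx)
    have h2 : (ENNReal.ofReal γ * ν S).toReal = γ * (ν S).toReal := by
      rw [ENNReal.toReal_mul, ENNReal.toReal_ofReal hγ]
    rw [← h2]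
    exact ENNReal.toReal_mono (ENNReal.mul_ne_top ENNReal.ofReal_ne_top (measure_ne_top _ _)) h1
  have key : ∀ S : Set α, MeasurableSet S →
      (μ S).toReal - γ * (ν S).toReal ≤ (μ A).toReal - γ * (ν A).toReal := by
    intro S hS
    have eμS : (μ S).toReal = (μ (S ∩ A)).toReal + (μ (S \ A)).toReal := by
      rw [← measure_inter_add_diff S hA,
        ENNReal.toReal_add (measure_ne_top _ _) (measure_ne_top _ _)]
    have eνS : (ν S).toReal = (ν (S ∩ A)).toReal + (ν (S \ A)).toReal := by
      rw [← measure_inter_add_diff S hA,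
        ENNReal.toReal_add (measure_ne_top _ _) (measure_ne_top _ _)]
    have eμA : (μ A).toReal = (μ (A ∩ S)).toReal + (μ (A \ S)).toReal := by
      rw [← measure_inter_add_diff A hS,
        ENNReal.toReal_add (measure_ne_top _ _) (measure_ne_top _ _)]
    have eνA : (ν A).toReal = (ν (A ∩ S)).toReal + (ν (A \ S)).toReal := by
      rw [← measure_inter_add_diff A hS,
        ENNReal.toReal_add (measure_ne_top _ _) (measure_ne_top _ _)]
    have hcomm : S ∩ A = A ∩ S := Set.inter_comm S A
    have c2 : (μ (S \ A)).toReal ≤ γ * (ν (S \ A)).toReal :=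
      claim2 _ (hS.diff hA) (fun x hx => hx.2)
    have c1 : γ * (ν (A \ S)).toReal ≤ (μ (A \ S)).toReal :=
      claim1 _ (hA.diff hS) fun x hx => hx.1
    have eνS' : γ * (ν S).toReal
        = γ * (ν (S ∩ A)).toReal + γ * (ν (S \ A)).toReal := by rw [eνS]; ring
    have eνA' : γ * (ν A).toReal
        = γ * (ν (A ∩ S)).toReal + γ * (ν (A \ S)).toReal := by rw [eνA]; ring
    rw [hcomm] at eμS eνS'
    linarith
  have h0 : 0 ≤ (μ A).toReal - γ * (ν A).toReal := by
    have := key ∅ MeasurableSet.empty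
    simpa using this
  have hF : ∀ S : Set α,
      (⨆ (_ : MeasurableSet S), ((μ S).toReal - γ * (ν S).toReal))
        ≤ (μ A).toReal - γ * (ν A).toReal := by
    intro S
    by_cases hS : MeasurableSet S
    · haveI : Nonempty (MeasurableSet S) := ⟨hS⟩
      rw [ciSup_const]
      exact key S hS
    · haveI : IsEmpty (MeasurableSet S) := ⟨hS⟩
      rw [Real.iSup_of_isEmpty]
      exact h0
  refine le_antisymm (Real.iSup_le hF h0) ?_
  have hbdd : BddAbove (Set.range fun S : Set α =>
      ⨆ (_ : MeasurableSet S), ((μ S).toReal - γ * (ν S).toReal)) := by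
    refine ⟨(μ A).toReal - γ * (ν A).toReal, ?_⟩
    rintro x ⟨S, rfl⟩
    exact hF S
  have hle := le_ciSup hbdd A
  refine le_trans ?_ hle
  haveI : Nonempty (MeasurableSet A) := ⟨hA⟩
  rw [ciSup_const]

lemma lintegral_pi_prod : ∀ (n : ℕ) (μ : Fin n → Measure ℝ), (∀ i, SigmaFinite (μ i)) →
    ∀ (f : Fin n → ℝ → ℝ≥0∞), (∀ i, Measurable (f i)) →
    ∫⁻ x : Fin n → ℝ, ∏ i, f i (x i) ∂(Measure.pi μ) = ∏ i, ∫⁻ t, f i t ∂(μ i) := by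
  intro n
  induction n with
  | zero => intro μ _ f _; simp
  | succ n ih =>
    intro μ hμ f hf
    haveI := fun i => hμ i
    have hmp := measurePreserving_piFinSuccAbove μ 0
    have hgm : Measurable fun p : ℝ × (Fin n → ℝ) =>
        f 0 p.1 * ∏ j : Fin n, f (Fin.succ j) (p.2 j) := by
      refine ((hf 0).comp measurable_fst).mul ?_
      exact Finset.measurable_prod _ fun j _ =>
        (hf _).comp ((measurable_pi_apply j).comp measurable_snd)
    have hcomp : ∀ x : Fin (n+1) → ℝ,
        (∏ i, f i (x i)) = (fun p : ℝ × (Fin n → ℝ) =>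
          f 0 p.1 * ∏ j : Fin n, f (Fin.succ j) (p.2 j))
            ((MeasurableEquiv.piFinSuccAbove (fun _ => ℝ) 0) x) := by
      intro x
      simp [MeasurableEquiv.piFinSuccAbove, Fin.prod_univ_succ, Fin.zero_succAbove, Fin.tail]
    calc ∫⁻ x : Fin (n+1) → ℝ, ∏ i, f i (x i) ∂(Measure.pi μ)
        = ∫⁻ p : ℝ × (Fin n → ℝ), f 0 p.1 * ∏ j : Fin n, f (Fin.succ j) (p.2 j)
            ∂((μ 0).prod (Measure.pi fun j => μ ((0 : Fin (n+1)).succAbove j))) := by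
          rw [← hmp.lintegral_comp hgm]
          exact lintegral_congr fun x => hcomp x
      _ = (∫⁻ t, f 0 t ∂(μ 0)) * ∏ j : Fin n, ∫⁻ t, f (Fin.succ j) t ∂(μ (Fin.succ j)) := by
          have hg : Measurable fun y : Fin n → ℝ => ∏ j : Fin n, f (Fin.succ j) (y j) :=
            Finset.measurable_prod _ fun j _ => (hf _).comp (measurable_pi_apply j)
          rw [lintegral_prod_mul (hf 0).aemeasurable hg.aemeasurable]
          congr 1
          have : (fun j : Fin n => μ ((0 : Fin (n+1)).succAbove j)) = fun j => μ (Fin.succ j) := by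
            funext j; simp [Fin.zero_succAbove]
          rw [this]
          exact ih (fun j => μ (Fin.succ j)) (fun j => inferInstance)
            (fun j => f (Fin.succ j)) (fun j => hf _)
      _ = ∏ i, ∫⁻ t, f i t ∂(μ i) := by rw [Fin.prod_univ_succ]

lemma pi_withDensity' {n : ℕ} (μ : Fin n → Measure ℝ) [hμ : ∀ i, SigmaFinite (μ i)]
    (ν : Fin n → Measure ℝ) [hν : ∀ i, SigmaFinite (ν i)]
    (f : Fin n → ℝ → ℝ≥0∞) (hf : ∀ i, Measurable (f i))
    (h : ∀ i, ν i = (μ i).withDensity (f i)) :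
    Measure.pi ν = (Measure.pi μ).withDensity (fun x => ∏ i, f i (x i)) := by
  refine Measure.pi_eq fun s hs => ?_
  rw [withDensity_apply _ (MeasurableSet.univ_pi hs),
    ← lintegral_indicator (MeasurableSet.univ_pi hs)]
  have hptwise : ∀ x : Fin n → ℝ,
      (Set.univ.pi s).indicator (fun x => ∏ i, f i (x i)) x
        = ∏ i, (s i).indicator (f i) (x i) := by
    intro x
    by_cases hx : x ∈ Set.univ.pi s
    · rw [Set.indicator_of_mem hx]
      exact Finset.prod_congr rfl fun i _ =>
        (Set.indicator_of_mem (hx i (Set.mem_univ i)) _).symm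
    · rw [Set.indicator_of_notMem hx]
      rw [Set.mem_univ_pi] at hx
      push_neg at hx
      obtain ⟨i, hi⟩ := hx
      exact (Finset.prod_eq_zero (Finset.mem_univ i)
        (by rw [Set.indicator_of_notMem hi])).symm
  rw [lintegral_congr hptwise,
    lintegral_pi_prod n μ hμ _ (fun i => (hf i).indicator (hs i))]
  refine Finset.prod_congr rfl fun i _ => ?_
  rw [lintegral_indicator (hs i), ← withDensity_apply _ (hs i), h i]

lemma gaussianReal_withDensity_ratio (a b : ℝ) (V : ℝ≥0) (hV : V ≠ 0) :
    gaussianReal a V = (gaussianReal b V).withDensity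
      (fun t => ENNReal.ofReal (Real.exp (((a - b) * t - (a ^ 2 - b ^ 2) / 2) / V))) := by
  have hmeas : Measurable fun t : ℝ =>
      ENNReal.ofReal (Real.exp (((a - b) * t - (a ^ 2 - b ^ 2) / 2) / V)) := by
    apply Measurable.ennreal_ofReal; fun_prop
  rw [gaussianReal_of_var_ne_zero a hV, gaussianReal_of_var_ne_zero b hV,
    ← withDensity_mul _ (measurable_gaussianPDF b V) hmeas]
  congr 1
  funext t
  have hV' : (V : ℝ) ≠ 0 := by exact_mod_cast hV
  rw [Pi.mul_apply, gaussianPDF, gaussianPDF,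
    ← ENNReal.ofReal_mul (gaussianPDFReal_nonneg b V t)]
  congr 1
  rw [gaussianPDFReal, gaussianPDFReal]
  rw [mul_assoc ((Real.sqrt (2 * π * (V:ℝ)))⁻¹), ← Real.exp_add]
  congr 2
  field_simp
  ring

lemma gaussianPDFReal_conv (a b t x : ℝ) (v₁ v₂ : ℝ≥0) (h₁ : v₁ ≠ 0) (h₂ : v₂ ≠ 0) :
    gaussianPDFReal a v₁ x * gaussianPDFReal b v₂ (t - x)
      = gaussianPDFReal (a + b) (v₁ + v₂) t *
        gaussianPDFReal (a + v₁ * (t - a - b) / (v₁ + v₂)) (v₁ * v₂ / (v₁ + v₂)) x := by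
  have hV1 : (0:ℝ) < (v₁ : ℝ) := NNReal.coe_pos.mpr (pos_iff_ne_zero.mpr h₁)
  have hV2 : (0:ℝ) < (v₂ : ℝ) := NNReal.coe_pos.mpr (pos_iff_ne_zero.mpr h₂)
  have hsum : (0:ℝ) < (v₁ : ℝ) + (v₂ : ℝ) := by linarith
  rw [gaussianPDFReal, gaussianPDFReal, gaussianPDFReal, gaussianPDFReal]
  push_cast
  rw [mul_mul_mul_comm, mul_mul_mul_comm ((Real.sqrt (2 * π * ((v₁:ℝ) + v₂)))⁻¹)]
  congr 1
  · rw [← mul_inv, ← mul_inv, ← Real.sqrt_mul (by positivity), ← Real.sqrt_mul (by positivity)]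
    congr 1
    field_simp
  · rw [← Real.exp_add, ← Real.exp_add]
    congr 1
    field_simp
    ring

lemma measurable_gaussianPDF_param (b : ℝ) (v : ℝ≥0) :
    Measurable fun q : ℝ × ℝ => gaussianPDF (b + q.1) v q.2 := by
  unfold gaussianPDF gaussianPDFReal
  apply Measurable.ennreal_ofReal
  fun_prop

lemma gaussianReal_conv (a b : ℝ) (v₁ v₂ : ℝ≥0) :
    Measure.map (fun p : ℝ × ℝ => p.1 + p.2)
      ((gaussianReal a v₁).prod (gaussianReal b v₂))
      = gaussianReal (a + b) (v₁ + v₂) := by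
  by_cases h₁ : v₁ = 0
  · subst h₁
    rw [gaussianReal_zero_var, Measure.dirac_prod,
      Measure.map_map (by fun_prop) (by fun_prop)]
    have : ((fun p : ℝ × ℝ => p.1 + p.2) ∘ Prod.mk a) = (a + ·) := rfl
    rw [this, gaussianReal_map_const_add, add_comm b a, zero_add]
  by_cases h₂ : v₂ = 0
  · subst h₂
    rw [gaussianReal_zero_var, Measure.prod_dirac,
      Measure.map_map (by fun_prop) (by fun_prop)]
    have : ((fun p : ℝ × ℝ => p.1 + p.2) ∘ fun x : ℝ => (x, b)) = (· + b) := rfl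
    rw [this, gaussianReal_map_add_const, add_zero]
  have hsum : v₁ + v₂ ≠ 0 := by simp [h₁]
  have hvstar : v₁ * v₂ / (v₁ + v₂) ≠ 0 := by
    rw [div_eq_mul_inv]
    exact mul_ne_zero (mul_ne_zero h₁ h₂) (inv_ne_zero hsum)
  ext s hs
  rw [Measure.map_apply (by fun_prop) hs,
    Measure.prod_apply (measurable_add hs)]
  have step1 : ∀ x : ℝ,
      (gaussianReal b v₂) (Prod.mk x ⁻¹' ((fun p : ℝ × ℝ => p.1 + p.2) ⁻¹' s))
        = ∫⁻ u in s, gaussianPDF (b + x) v₂ u := by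
    intro x
    have hpre : Prod.mk x ⁻¹' ((fun p : ℝ × ℝ => p.1 + p.2) ⁻¹' s) = (x + ·) ⁻¹' s := rfl
    rw [hpre, ← Measure.map_apply (by fun_prop) hs, gaussianReal_map_const_add x,
      gaussianReal_apply _ h₂ s]
  rw [lintegral_congr step1, gaussianReal_of_var_ne_zero a h₁]
  have hG : Measurable fun x : ℝ => ∫⁻ u in s, gaussianPDF (b + x) v₂ u :=
    Measurable.lintegral_prod_right (measurable_gaussianPDF_param b v₂)
  rw [lintegral_withDensity_eq_lintegral_mul volume (measurable_gaussianPDF a v₁) hG]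
  have hF : Measurable fun q : ℝ × ℝ => gaussianPDF a v₁ q.1 * gaussianPDF (b + q.1) v₂ q.2 := by
    unfold gaussianPDF gaussianPDFReal
    exact (Measurable.ennreal_ofReal (by fun_prop)).mul (Measurable.ennreal_ofReal (by fun_prop))
  have hFx : ∀ x : ℝ, Measurable fun u : ℝ => gaussianPDF (b + x) v₂ u := by
    intro x
    unfold gaussianPDF gaussianPDFReal
    exact Measurable.ennreal_ofReal (by fun_prop)
  have step2 : ∀ x : ℝ,
      (gaussianPDF a v₁ * fun x => ∫⁻ u in s, gaussianPDF (b + x) v₂ u) x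
        = ∫⁻ u in s, gaussianPDF a v₁ x * gaussianPDF (b + x) v₂ u := by
    intro x
    exact (lintegral_const_mul _ (hFx x)).symm
  rw [lintegral_congr step2]
  rw [lintegral_lintegral_swap hF.aemeasurable]
  have step3 : ∀ u : ℝ,
      ∫⁻ x, gaussianPDF a v₁ x * gaussianPDF (b + x) v₂ u = gaussianPDF (a + b) (v₁ + v₂) u := by
    intro u
    have hpt : ∀ x : ℝ, gaussianPDF a v₁ x * gaussianPDF (b + x) v₂ u
        = gaussianPDF (a + b) (v₁ + v₂) u *
          gaussianPDF (a + v₁ * (u - a - b) / (v₁ + v₂)) (v₁ * v₂ / (v₁ + v₂)) x := by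
      intro x
      have hre : gaussianPDFReal (b + x) v₂ u = gaussianPDFReal b v₂ (u - x) := by
        rw [gaussianPDFReal, gaussianPDFReal]
        congr 2
        ring
      rw [gaussianPDF, gaussianPDF, gaussianPDF, gaussianPDF,
        ← ENNReal.ofReal_mul (gaussianPDFReal_nonneg a v₁ x),
        ← ENNReal.ofReal_mul (gaussianPDFReal_nonneg (a + b) (v₁ + v₂) u), hre,
        gaussianPDFReal_conv a b u x v₁ v₂ h₁ h₂]
    rw [lintegral_congr hpt, lintegral_const_mul _ (measurable_gaussianPDF _ _),
      lintegral_gaussianPDF_eq_one _ hvstar, mul_one]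
  rw [lintegral_congr fun u => step3 u]
  exact (gaussianReal_apply _ hsum s).symm

lemma map_sum_gaussian : ∀ (n : ℕ) (c m : Fin n → ℝ) (V : ℝ≥0),
    Measure.map (fun x : Fin n → ℝ => ∑ i, c i * x i)
      (Measure.pi fun i => gaussianReal (m i) V)
      = gaussianReal (∑ i, c i * m i) (Real.toNNReal (∑ i, c i ^ 2) * V) := by
  intro n
  induction n with
  | zero =>
    intro c m V
    have h0 : (fun x : Fin 0 → ℝ => ∑ i, c i * x i) = fun _ => (0:ℝ) := by
      funext x; simp
    rw [h0, Measure.map_const]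
    simp [gaussianReal_zero_var]
  | succ n ih =>
    intro c m V
    set e := MeasurableEquiv.piFinSuccAbove (fun _ : Fin (n+1) => ℝ) 0 with he
    have hmp := (measurePreserving_piFinSuccAbove
      (fun i : Fin (n+1) => gaussianReal (m i) V) 0).symm e
    have hS : Measurable fun x : Fin (n+1) → ℝ => ∑ i, c i * x i :=
      Finset.measurable_sum _ fun i _ => (measurable_pi_apply i).const_mul _
    rw [← hmp.map_eq, Measure.map_map hS e.symm.measurable]
    have hfun : ((fun x : Fin (n+1) → ℝ => ∑ i, c i * x i) ∘ e.symm)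
        = (fun q : ℝ × ℝ => q.1 + q.2) ∘
          (Prod.map (fun t : ℝ => c 0 * t) (fun y : Fin n → ℝ => ∑ j, c (Fin.succ j) * y j)) := by
      funext p
      simp [e, MeasurableEquiv.piFinSuccAbove, Fin.sum_univ_succ, Fin.zero_succAbove,
        Fin.insertNthEquiv, Fin.insertNth_zero]
    rw [hfun, ← Measure.map_map (by fun_prop) (by fun_prop)]
    have htail : (fun j : Fin n => gaussianReal (m ((0 : Fin (n+1)).succAbove j)) V)
        = fun j => gaussianReal (m (Fin.succ j)) V := by
      funext j; simp [Fin.zero_succAbove]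
    rw [← Measure.map_prod_map _ _ (by fun_prop)
      (Finset.measurable_sum Finset.univ fun j _ => (measurable_pi_apply j).const_mul _),
      htail, gaussianReal_map_const_mul, ih (fun j => c (Fin.succ j)) (fun j => m (Fin.succ j)) V,
      gaussianReal_conv]
    congr 1
    · rw [Fin.sum_univ_succ]
    · rw [← add_mul]
      congr 1
      apply NNReal.coe_injective
      push_cast [Real.coe_toNNReal _ (Finset.sum_nonneg fun i _ => sq_nonneg (c (Fin.succ i))),
        Real.coe_toNNReal _ (Finset.sum_nonneg fun i _ => sq_nonneg (c i))]
      rw [Fin.sum_univ_succ]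

lemma Qfun_nonneg (a : ℝ) : 0 ≤ Qfun a := by
  apply mul_nonneg (by positivity)
  exact integral_nonneg fun u => (Real.exp_pos _).le

lemma map_withDensity_equiv {α β : Type*} [MeasurableSpace α] [MeasurableSpace β]
    (e : α ≃ᵐ β) (μ : Measure α) (f : β → ℝ≥0∞) (hf : Measurable f) :
    Measure.map e (μ.withDensity (f ∘ e)) = (Measure.map e μ).withDensity f := by
  ext s hs
  rw [Measure.map_apply e.measurable hs, withDensity_apply _ hs,
    withDensity_apply _ (e.measurable hs), setLIntegral_map hs hf e.measurable]
  rfl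

lemma gaussianReal_Ici (a : ℝ) :
    gaussianReal 0 1 (Set.Ici a) = ENNReal.ofReal (Qfun a) := by
  rw [gaussianReal_apply 0 one_ne_zero, gaussianPDF_def,
    ← ofReal_integral_eq_lintegral_ofReal ((integrable_gaussianPDFReal 0 1).integrableOn)
      (Filter.Eventually.of_forall fun x => gaussianPDFReal_nonneg _ _ _)]
  congr 1
  have hpt : ∀ x : ℝ, gaussianPDFReal 0 1 x
      = (1 / Real.sqrt (2 * π)) * Real.exp (-x ^ 2 / 2) := by
    intro x
    rw [gaussianPDFReal]
    norm_num
  rw [Qfun, ← MeasureTheory.integral_const_mul]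
  exact setIntegral_congr_fun measurableSet_Ici fun x _ => hpt x

lemma gaussianReal_std_neg :
    Measure.map (fun x : ℝ => -x) (gaussianReal 0 1) = gaussianReal 0 1 := by
  have h := gaussianReal_map_const_mul (μ := 0) (v := 1) (-1)
  have h1 : (fun x : ℝ => -1 * x) = fun x : ℝ => -x := by funext x; ring
  have h2 : (⟨(-1:ℝ)^2, sq_nonneg _⟩ : ℝ≥0) * 1 = 1 := by
    apply NNReal.coe_injective; norm_num
    rfl
  rw [h1, mul_zero] at h
  rw [h]
  congr 1

lemma gaussianReal_Iic (m c s : ℝ) (hs : 0 < s) :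
    gaussianReal m (Real.toNNReal (s ^ 2)) (Set.Iic c)
      = ENNReal.ofReal (Qfun ((m - c) / s)) := by
  have hvar : (⟨s^2, sq_nonneg s⟩ : ℝ≥0) * 1 = Real.toNNReal (s^2) := by
    apply NNReal.coe_injective
    simp [Real.coe_toNNReal _ (sq_nonneg s)]
    rfl
  have key : gaussianReal m (Real.toNNReal (s ^ 2))
      = Measure.map (· + m) (Measure.map (s * ·) (gaussianReal 0 1)) := by
    rw [gaussianReal_map_const_mul, gaussianReal_map_add_const, mul_zero, zero_add]
    congr 1
    exact hvar.symm
  rw [key, Measure.map_apply (by fun_prop) measurableSet_Iic]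
  have hp1 : ((· + m) ⁻¹' Set.Iic c : Set ℝ) = Set.Iic (c - m) := by
    ext x; simp [le_sub_iff_add_le]
  rw [hp1, Measure.map_apply (by fun_prop) measurableSet_Iic]
  have hp2 : (((s * ·)) ⁻¹' Set.Iic (c - m) : Set ℝ) = Set.Iic ((c - m) / s) := by
    ext x; simp [le_div_iff₀ hs, mul_comm]
  rw [hp2]
  have hneg : gaussianReal 0 1 (Set.Iic ((c - m) / s))
      = gaussianReal 0 1 (Set.Ici (-((c - m) / s))) := by
    conv_lhs => rw [← gaussianReal_std_neg]
    rw [Measure.map_apply (by fun_prop) measurableSet_Iic]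
    congr 1
    ext x; simp [neg_le]
  rw [hneg, gaussianReal_Ici]
  congr 1
  rw [show -((c - m) / s) = (m - c) / s by ring]

/-- For `m₁ ≠ m₂` in `ℝ^d`, `σ > 0`, `γ ≥ 1`, and `β = ‖m₂ − m₁‖/σ`:
`E_γ(N(m₁,σ²I) ‖ N(m₂,σ²I)) = Q(log γ/β − β/2) − γ·Q(log γ/β + β/2)`. -/
theorem Egamma_gaussian {d : ℕ} (m₁ m₂ : EuclideanSpace ℝ (Fin d)) (hm : m₁ ≠ m₂)
    (σ γ : ℝ) (hσ : 0 < σ) (hγ : 1 ≤ γ) :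
    Egamma γ (gaussE m₁ σ) (gaussE m₂ σ) =
      Qfun (Real.log γ / (‖m₂ - m₁‖ / σ) - (‖m₂ - m₁‖ / σ) / 2) -
        γ * Qfun (Real.log γ / (‖m₂ - m₁‖ / σ) + (‖m₂ - m₁‖ / σ) / 2) := by
  have hγ0 : (0:ℝ) < γ := lt_of_lt_of_le one_pos hγ
  have hD : 0 < ‖m₂ - m₁‖ := norm_pos_iff.mpr (sub_ne_zero.mpr (Ne.symm hm))
  have hVr : ((Real.toNNReal (σ ^ 2)) : ℝ) = σ ^ 2 := Real.coe_toNNReal _ (sq_nonneg σ)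
  have hV : Real.toNNReal (σ ^ 2) ≠ 0 := by
    rw [Ne, Real.toNNReal_eq_zero, not_le]; positivity
  set e := (MeasurableEquiv.toLp 2 (Fin d → ℝ)).symm with hedef
  have hsymm : MeasurableEquiv.toLp 2 (Fin d → ℝ) = e.symm := rfl
  set H : (Fin d → ℝ) → ℝ≥0∞ := fun y => ENNReal.ofReal (Real.exp
      ((∑ i, ((m₁ i - m₂ i) * y i - ((m₁ i) ^ 2 - (m₂ i) ^ 2) / 2))
        / ((Real.toNNReal (σ ^ 2) : ℝ)))) with hHdef
  have hsm : Measurable fun y : Fin d → ℝ =>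
      ∑ i, ((m₁ i - m₂ i) * y i - ((m₁ i) ^ 2 - (m₂ i) ^ 2) / 2) :=
    Finset.measurable_sum _ fun i _ => ((measurable_pi_apply i).const_mul _).sub measurable_const
  have hHm : Measurable H :=
    Measurable.ennreal_ofReal (Real.measurable_exp.comp (hsm.div_const _))
  -- Radon-Nikodym representation on the pi space
  have hpi : (Measure.pi fun i => gaussianReal (m₁ i) (Real.toNNReal (σ ^ 2)))
      = (Measure.pi fun i => gaussianReal (m₂ i) (Real.toNNReal (σ ^ 2))).withDensity H := by
    rw [pi_withDensity' (fun i => gaussianReal (m₂ i) (Real.toNNReal (σ ^ 2)))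
      (fun i => gaussianReal (m₁ i) (Real.toNNReal (σ ^ 2)))
      (fun i t => ENNReal.ofReal (Real.exp
        (((m₁ i - m₂ i) * t - ((m₁ i) ^ 2 - (m₂ i) ^ 2) / 2) / ((Real.toNNReal (σ ^ 2) : ℝ)))))
      (fun i => Measurable.ennreal_ofReal (by fun_prop))
      (fun i => gaussianReal_withDensity_ratio (m₁ i) (m₂ i) _ hV)]
    congr 1
    funext y
    rw [hHdef, ← ENNReal.ofReal_prod_of_nonneg (fun i _ => (Real.exp_pos _).le),
      ← Real.exp_sum]
    congr 2
    rw [Finset.sum_div]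
  haveI hP1 : IsProbabilityMeasure (gaussE m₁ σ) := by
    rw [gaussE]; exact Measure.isProbabilityMeasure_map (MeasurableEquiv.measurable _).aemeasurable
  haveI hP2 : IsProbabilityMeasure (gaussE m₂ σ) := by
    rw [gaussE]; exact Measure.isProbabilityMeasure_map (MeasurableEquiv.measurable _).aemeasurable
  have hrep : gaussE m₁ σ = (gaussE m₂ σ).withDensity (H ∘ ⇑e) := by
    rw [gaussE, gaussE, hsymm, hpi]
    have hcomp : H = (H ∘ ⇑e) ∘ ⇑e.symm := by
      funext y; simp
    rw [hcomp, map_withDensity_equiv e.symm _ _ (hHm.comp e.measurable)]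
    rfl
  have hEq := Egamma_eq_of_withDensity γ hγ0.le _ _ (hHm.comp e.measurable) hrep
  set c₀ : ℝ := (∑ i, ((m₂ i) ^ 2 - (m₁ i) ^ 2) / 2) - σ ^ 2 * Real.log γ with hc₀def
  have hAm : MeasurableSet {x : EuclideanSpace ℝ (Fin d) | ENNReal.ofReal γ ≤ (H ∘ ⇑e) x} :=
    measurableSet_le measurable_const (hHm.comp e.measurable)
  -- the value of each Gaussian measure on the optimal set
  have hval : ∀ m : EuclideanSpace ℝ (Fin d),
      (gaussE m σ) {x | ENNReal.ofReal γ ≤ (H ∘ ⇑e) x}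
        = ENNReal.ofReal (Qfun (((∑ i, (m₂ i - m₁ i) * m i) - c₀) / (‖m₂ - m₁‖ * σ))) := by
    intro m
    have hLm : Measurable fun y : Fin d → ℝ => ∑ i, (m₂ i - m₁ i) * y i :=
      Finset.measurable_sum _ fun i _ => (measurable_pi_apply i).const_mul _
    rw [gaussE, hsymm, Measure.map_apply e.symm.measurable hAm]
    have hpre : (⇑e.symm ⁻¹' {x | ENNReal.ofReal γ ≤ (H ∘ ⇑e) x})
        = (fun y : Fin d → ℝ => ∑ i, (m₂ i - m₁ i) * y i) ⁻¹' (Set.Iic c₀) := by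
      ext y
      simp only [Set.mem_preimage, Set.mem_setOf_eq, Function.comp_apply,
        MeasurableEquiv.apply_symm_apply, Set.mem_Iic]
      rw [hHdef]
      simp only []
      rw [ENNReal.ofReal_le_ofReal_iff (Real.exp_pos _).le,
        ← Real.log_le_iff_le_exp hγ0, hVr, le_div_iff₀ (by positivity : (0:ℝ) < σ ^ 2)]
      have hsy : (∑ i, ((m₁ i - m₂ i) * y i - ((m₁ i) ^ 2 - (m₂ i) ^ 2) / 2))
          = -(∑ i, (m₂ i - m₁ i) * y i) + (∑ i, ((m₂ i) ^ 2 - (m₁ i) ^ 2) / 2) := by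
        rw [← Finset.sum_neg_distrib, ← Finset.sum_add_distrib]
        exact Finset.sum_congr rfl fun i _ => by ring
      rw [hsy, hc₀def]
      constructor <;> intro hh <;> linarith
    rw [hpre, ← Measure.map_apply hLm measurableSet_Iic]
    have hmap := map_sum_gaussian d (fun i => m₂ i - m₁ i) (fun i => m i) (Real.toNNReal (σ ^ 2))
    rw [hmap]
    have hX : (∑ i, (m₂ i - m₁ i) ^ 2) = ‖m₂ - m₁‖ ^ 2 := by
      have h1 : ‖m₂ - m₁‖ = Real.sqrt (∑ i, (m₂ i - m₁ i) ^ 2) := by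
        rw [EuclideanSpace.norm_eq]
        congr 1
        exact Finset.sum_congr rfl fun i _ => by
          rw [PiLp.sub_apply, Real.norm_eq_abs, sq_abs]
      rw [h1, Real.sq_sqrt (Finset.sum_nonneg fun i _ => sq_nonneg _)]
    have hvar : Real.toNNReal (∑ i, (m₂ i - m₁ i) ^ 2) * Real.toNNReal (σ ^ 2)
        = Real.toNNReal ((‖m₂ - m₁‖ * σ) ^ 2) := by
      apply NNReal.coe_injective
      push_cast [Real.coe_toNNReal _ (Finset.sum_nonneg fun i _ => sq_nonneg (m₂ i - m₁ i)),
        Real.coe_toNNReal _ (sq_nonneg σ), Real.coe_toNNReal _ (sq_nonneg (‖m₂ - m₁‖ * σ))]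
      rw [hX]; ring
    rw [hvar, gaussianReal_Iic _ _ _ (by positivity)]
  rw [hEq, hval m₁, hval m₂, ENNReal.toReal_ofReal (Qfun_nonneg _),
    ENNReal.toReal_ofReal (Qfun_nonneg _)]
  have hX : (∑ i, (m₂ i - m₁ i) ^ 2) = ‖m₂ - m₁‖ ^ 2 := by
    have h1 : ‖m₂ - m₁‖ = Real.sqrt (∑ i, (m₂ i - m₁ i) ^ 2) := by
      rw [EuclideanSpace.norm_eq]
      congr 1
      exact Finset.sum_congr rfl fun i _ => by
        rw [PiLp.sub_apply, Real.norm_eq_abs, sq_abs]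
    rw [h1, Real.sq_sqrt (Finset.sum_nonneg fun i _ => sq_nonneg _)]
  have key1 : (∑ i, (m₂ i - m₁ i) * m₁ i) - c₀
      = σ ^ 2 * Real.log γ - ‖m₂ - m₁‖ ^ 2 / 2 := by
    rw [hc₀def, ← hX]
    have h2 : (∑ i, (m₂ i - m₁ i) * m₁ i) - (∑ i, ((m₂ i) ^ 2 - (m₁ i) ^ 2) / 2)
        = -((∑ i, (m₂ i - m₁ i) ^ 2) / 2) := by
      rw [← Finset.sum_sub_distrib, Finset.sum_div, ← Finset.sum_neg_distrib]
      exact Finset.sum_congr rfl fun i _ => by ring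
    linarith
  have key2 : (∑ i, (m₂ i - m₁ i) * m₂ i) - c₀
      = σ ^ 2 * Real.log γ + ‖m₂ - m₁‖ ^ 2 / 2 := by
    rw [hc₀def, ← hX]
    have h2 : (∑ i, (m₂ i - m₁ i) * m₂ i) - (∑ i, ((m₂ i) ^ 2 - (m₁ i) ^ 2) / 2)
        = (∑ i, (m₂ i - m₁ i) ^ 2) / 2 := by
      rw [← Finset.sum_sub_distrib, Finset.sum_div]
      exact Finset.sum_congr rfl fun i _ => by ring
    linarith
  rw [key1, key2]
  congr 2
  · field_simp
  · field_simp
end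

section
/- Let μ and ν be probability measures on a measurable space and let γ ≥ 1. Then E_γ(μ‖ν) = (1/2)‖μ − γν‖ + (1/2)(1 − γ), where ‖μ − γν‖ denotes the total variation norm of the finite signed measure μ − γν (i.e., the sum of the total masses of the positive and negative parts of its Hahn–Jordan decomposition). -/
open MeasureTheory ProbabilityTheory Real

/-- For probability measures `μ, ν` and `γ ≥ 1`,
`E_γ(μ‖ν) = ½‖μ − γν‖ + ½(1 − γ)`, where `‖μ − γν‖` is the total variation norm of
the finite signed measure `μ − γν` (the total mass of its total variation measure,
i.e. the sum of the masses of the Hahn–Jordan positive and negative parts). -/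
theorem Egamma_eq_totalVariation {α : Type*} [MeasurableSpace α]
    (μ ν : Measure α) [IsProbabilityMeasure μ] [IsProbabilityMeasure ν]
    (γ : ℝ) (hγ : 1 ≤ γ) :
    Egamma γ μ ν =
      (1 / 2) * ((μ.toSignedMeasure - γ • ν.toSignedMeasure).totalVariation Set.univ).toReal
        + (1 / 2) * (1 - γ) := by
  set ξ : SignedMeasure α := μ.toSignedMeasure - γ • ν.toSignedMeasure with hξdef
  -- the signed measure evaluated on measurable sets
  have hξ : ∀ A : Set α, MeasurableSet A → ξ A = (μ A).toReal - γ * (ν A).toReal := by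
    intro A hA
    simp [hξdef, VectorMeasure.sub_apply, VectorMeasure.smul_apply,
      Measure.toSignedMeasure_apply_measurable hA, smul_eq_mul, hA]
    rfl
  obtain ⟨i, hi₁, hi₂, hi₃, hp, hn⟩ := ξ.toJordanDecomposition_spec
  -- key inequality: ξ A ≤ ξ i for all measurable A
  have hle : ∀ A : Set α, MeasurableSet A → ξ A ≤ ξ i := by
    intro A hA
    have h1 : ξ (A \ i) ≤ 0 := by
      have := VectorMeasure.subset_le_of_restrict_le_restrict ξ 0 hi₁.compl hi₃
        (Set.diff_subset_compl A i)
      simpa using this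
    have h2 : (0 : VectorMeasure α ℝ) (i \ A) ≤ ξ (i \ A) :=
      VectorMeasure.subset_le_of_restrict_le_restrict 0 ξ hi₁ hi₂ Set.diff_subset
    have h2' : (0 : ℝ) ≤ ξ (i \ A) := by simpa using h2
    have hA1 : ξ A = ξ (A ∩ i) + ξ (A \ i) := by
      rw [← VectorMeasure.of_union (Set.disjoint_of_subset_left Set.inter_subset_right
        disjoint_sdiff_self_right) (hA.inter hi₁) (hA.diff hi₁),
        Set.inter_union_diff]
    have hi' : ξ i = ξ (A ∩ i) + ξ (i \ A) := by
      rw [← VectorMeasure.of_union (Set.disjoint_of_subset_left Set.inter_subset_left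
        disjoint_sdiff_self_right) (hA.inter hi₁) (hi₁.diff hA),
        Set.inter_comm, Set.inter_union_diff]
    linarith
  have hξi0 : (0 : ℝ) ≤ ξ i := ξ.nonneg_of_zero_le_restrict hi₂
  -- values of pos and neg parts on univ
  have hP : (ξ.toJordanDecomposition.posPart Set.univ).toReal = ξ i := by
    rw [hp, SignedMeasure.toMeasureOfZeroLE_apply _ hi₂ hi₁ MeasurableSet.univ]
    simp
  have hN : (ξ.toJordanDecomposition.negPart Set.univ).toReal = -ξ iᶜ := by
    rw [hn, SignedMeasure.toMeasureOfLEZero_apply _ hi₃ hi₁.compl MeasurableSet.univ]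
    simp
  have hTV : (ξ.totalVariation Set.univ).toReal = ξ i - ξ iᶜ := by
    rw [SignedMeasure.totalVariation, Measure.add_apply,
      ENNReal.toReal_add (measure_ne_top _ _) (measure_ne_top _ _), hP, hN]
    ring
  have huniv : ξ i + ξ iᶜ = 1 - γ := by
    have : ξ Set.univ = ξ i + ξ iᶜ := by
      rw [← VectorMeasure.of_union disjoint_compl_right hi₁ hi₁.compl,
        Set.union_compl_self]
    rw [← this, hξ Set.univ MeasurableSet.univ]
    simp
  -- compute the supremum
  have hsup : Egamma γ μ ν = ξ i := by
    rw [Egamma]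
    apply le_antisymm
    · apply ciSup_le
      intro A
      by_cases hA : MeasurableSet A
      · rw [ciSup_pos hA, ← hξ A hA]
        exact hle A hA
      · haveI : IsEmpty (MeasurableSet A) := ⟨hA⟩
        rw [Real.iSup_of_isEmpty]
        exact hξi0
    · have hb : BddAbove (Set.range fun A : Set α =>
          ⨆ (_ : MeasurableSet A), ((μ A).toReal - γ * (ν A).toReal)) := by
        refine ⟨ξ i, ?_⟩
        rintro x ⟨A, rfl⟩
        dsimp only
        by_cases hA : MeasurableSet A
        · rw [ciSup_pos hA, ← hξ A hA]; exact hle A hA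
        · haveI : IsEmpty (MeasurableSet A) := ⟨hA⟩
          rw [Real.iSup_of_isEmpty]
          exact hξi0
      calc ξ i = (μ i).toReal - γ * (ν i).toReal := hξ i hi₁
        _ = ⨆ (_ : MeasurableSet i), ((μ i).toReal - γ * (ν i).toReal) :=
            (ciSup_pos (f := fun _ => (μ i).toReal - γ * (ν i).toReal) hi₁).symm
        _ ≤ _ := le_ciSup hb i
  rw [hsup, hTV]
  linarith
end

section
/- Let μ and ν be probability measures on a measurable space with μ absolutely continuous with respect to ν, let g := dμ/dν be the Radon–Nikodym derivative, and let γ ≥ 1. Then E_γ(μ‖ν) = μ({g > γ}) − γ·ν({g > γ}). -/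
open MeasureTheory ProbabilityTheory Real

/-- For probability measures `μ ≪ ν` with Radon–Nikodym derivative
`g = dμ/dν` and `γ ≥ 1`: `E_γ(μ‖ν) = μ({g > γ}) − γ·ν({g > γ})`. -/
theorem Egamma_eq_rnDeriv_level_set {α : Type*} [MeasurableSpace α]
    (μ ν : Measure α) [IsProbabilityMeasure μ] [IsProbabilityMeasure ν]
    (hac : μ ≪ ν) (γ : ℝ) (hγ : 1 ≤ γ) :
    Egamma γ μ ν =
      (μ {x | ENNReal.ofReal γ < μ.rnDeriv ν x}).toReal
        - γ * (ν {x | ENNReal.ofReal γ < μ.rnDeriv ν x}).toReal := by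
  set S : Set α := {x | ENNReal.ofReal γ < μ.rnDeriv ν x} with hSdef
  have hSm : MeasurableSet S := measurableSet_lt measurable_const (μ.measurable_rnDeriv ν)
  have hγ0 : (0:ℝ) ≤ γ := le_trans zero_le_one hγ
  set f : α → ℝ := fun x => (μ.rnDeriv ν x).toReal with hfdef
  have hint : Integrable f ν := Measure.integrable_toReal_rnDeriv
  set h : α → ℝ := fun x => f x - γ with hhdef
  have hinth : Integrable h ν := hint.sub (integrable_const γ)
  have key : ∀ A : Set α, MeasurableSet A →
      (μ A).toReal - γ * (ν A).toReal = ∫ x in A, h x ∂ν := by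
    intro A hA
    have h1 : (μ A).toReal = ∫ x in A, f x ∂ν :=
      (Measure.setIntegral_toReal_rnDeriv hac A).symm
    rw [hhdef]
    rw [integral_sub hint.integrableOn (integrable_const γ).integrableOn,
      setIntegral_const, smul_eq_mul, h1, mul_comm, measureReal_def]
  have hle : ∀ A : Set α, MeasurableSet A → ∫ x in A, h x ∂ν ≤ ∫ x in S, h x ∂ν := by
    intro A hA
    have h1 : ∫ x in A, h x ∂ν = (∫ x in A ∩ S, h x ∂ν) + ∫ x in A \ S, h x ∂ν :=
      (integral_inter_add_diff hSm hinth.integrableOn).symm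
    have hpos : 0 ≤ᵐ[ν.restrict S] h := by
      have hfin := Measure.rnDeriv_lt_top μ ν
      filter_upwards [ae_restrict_of_ae hfin, ae_restrict_mem hSm] with x hx hxS
      have hxγ : γ < (μ.rnDeriv ν x).toReal :=
        (ENNReal.ofReal_lt_iff_lt_toReal hγ0 hx.ne).mp hxS
      simp only [hhdef, hfdef, Pi.zero_apply]
      linarith
    have h2 : ∫ x in A \ S, h x ∂ν ≤ 0 := by
      apply setIntegral_nonpos (hA.diff hSm)
      intro x hx
      have hxS : ¬ ENNReal.ofReal γ < μ.rnDeriv ν x := hx.2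
      have : μ.rnDeriv ν x ≤ ENNReal.ofReal γ := not_lt.mp hxS
      have : f x ≤ γ := ENNReal.toReal_le_of_le_ofReal hγ0 this
      simp only [hhdef]
      linarith
    have h3 : ∫ x in A ∩ S, h x ∂ν ≤ ∫ x in S, h x ∂ν :=
      setIntegral_mono_set hinth.integrableOn hpos
        (HasSubset.Subset.eventuallyLE Set.inter_subset_right)
    linarith
  have hbound : ∀ A : Set α, MeasurableSet A →
      (μ A).toReal - γ * (ν A).toReal ≤ (μ S).toReal - γ * (ν S).toReal := by
    intro A hA
    rw [key A hA, key S hSm]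
    exact hle A hA
  have hc0 : 0 ≤ (μ S).toReal - γ * (ν S).toReal := by
    have := hbound ∅ MeasurableSet.empty
    simpa using this
  rw [Egamma]
  apply le_antisymm
  · apply Real.iSup_le _ hc0
    intro A
    apply Real.iSup_le _ hc0
    intro hA
    exact hbound A hA
  · have hb : BddAbove (Set.range fun A : Set α =>
        ⨆ (_ : MeasurableSet A), ((μ A).toReal - γ * (ν A).toReal)) := by
      refine ⟨(μ S).toReal - γ * (ν S).toReal, ?_⟩
      rintro x ⟨A, rfl⟩
      exact Real.iSup_le (fun hA => hbound A hA) hc0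
    calc (μ S).toReal - γ * (ν S).toReal
        = ⨆ (_ : MeasurableSet S), ((μ S).toReal - γ * (ν S).toReal) :=
          by rw [ciSup_pos hSm]
      _ ≤ _ := le_ciSup hb S
end

section
/- Let a, b ∈ [0, 1/2] and let K^{a,b} be the Markov kernel on the two-point space {0, 1} with K^{a,b}(0) assigning probabilities (1 − a, a) and K^{a,b}(1) assigning probabilities (b, 1 − b) to the points (0, 1). Then for every γ ≥ 1, η_γ(K^{a,b}) = max{ ((1 − a) − γb)⁺, ((1 − b) − γa)⁺ }, where (x)⁺ := max(x, 0). In particular, η₁(K^{a,b}) = 1 − a − b. -/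
open MeasureTheory ProbabilityTheory Real
open scoped ENNReal NNReal

section aux

lemma fin2_set_cases (A : Set (Fin 2)) :
    A = ∅ ∨ A = {0} ∨ A = {1} ∨ A = Set.univ := by
  by_cases h0 : (0 : Fin 2) ∈ A <;> by_cases h1 : (1 : Fin 2) ∈ A
  · right; right; right; ext x; fin_cases x <;> simp [h0, h1]
  · right; left; ext x; fin_cases x <;> simp [h0, h1]
  · right; right; left; ext x; fin_cases x <;> simp [h0, h1]
  · left; ext x; fin_cases x <;> simp [h0, h1]

lemma fin2_toReal_sum (μ : Measure (Fin 2)) [IsProbabilityMeasure μ] :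
    (μ {0}).toReal + (μ {1}).toReal = 1 := by
  have hd : Disjoint ({0} : Set (Fin 2)) {1} := by simp
  have hu : ({0} : Set (Fin 2)) ∪ {1} = Set.univ := by ext x; fin_cases x <;> simp
  have h : μ {0} + μ {1} = 1 := by
    rw [← measure_union hd (by trivial), hu, measure_univ]
  have := congrArg ENNReal.toReal h
  rwa [ENNReal.toReal_add (measure_ne_top μ _) (measure_ne_top μ _), ENNReal.toReal_one] at this

lemma egamma_fin2 {γ : ℝ} (hγ : 1 ≤ γ) (μ ν : Measure (Fin 2)) [IsProbabilityMeasure μ]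
    [IsProbabilityMeasure ν] :
    Egamma γ μ ν = max 0 (max ((μ {0}).toReal - γ * (ν {0}).toReal)
      ((μ {1}).toReal - γ * (ν {1}).toReal)) := by
  have hE : Egamma γ μ ν = ⨆ A : Set (Fin 2), ((μ A).toReal - γ * (ν A).toReal) := by
    unfold Egamma
    exact iSup_congr fun A => ciSup_pos trivial
  have hub1 : ∀ A : Set (Fin 2), (μ A).toReal - γ * (ν A).toReal ≤ 1 := by
    intro A
    have h1 : (μ A).toReal ≤ 1 := by
      have := ENNReal.toReal_mono (by simp) (prob_le_one (μ := μ) (s := A))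
      simpa using this
    have h2 : 0 ≤ γ * (ν A).toReal :=
      mul_nonneg (by linarith) ENNReal.toReal_nonneg
    linarith
  have hbdd : BddAbove (Set.range fun A : Set (Fin 2) => (μ A).toReal - γ * (ν A).toReal) := by
    refine ⟨1, ?_⟩
    rintro x ⟨A, rfl⟩
    exact hub1 A
  rw [hE]
  apply le_antisymm
  · apply ciSup_le
    intro A
    rcases fin2_set_cases A with rfl | rfl | rfl | rfl
    · simp
    · exact le_trans (le_max_left _ _) (le_max_right _ _)
    · exact le_trans (le_max_right _ _) (le_max_right _ _)
    · have h : (μ Set.univ).toReal - γ * (ν Set.univ).toReal = 1 - γ * 1 := by simp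
      rw [h]
      have : 1 - γ * 1 ≤ 0 := by linarith
      exact this.trans (le_max_left _ _)
  · refine max_le ?_ (max_le ?_ ?_)
    · have := le_ciSup hbdd (∅ : Set (Fin 2))
      simpa using this
    · exact le_ciSup hbdd ({0} : Set (Fin 2))
    · exact le_ciSup hbdd ({1} : Set (Fin 2))

lemma max_collapse (X Y : ℝ) (hY : Y ≤ 0) : max 0 (max X Y) = max X 0 := by
  rcases le_total Y X with h | h
  · rw [max_eq_left h, max_comm]
  · rw [max_eq_right h, max_eq_left hY, max_eq_right (h.trans hY)]

lemma contraction_core (γ a b s t : ℝ) (hγ : 1 ≤ γ) (ha : 0 ≤ a) (ha' : a ≤ 1/2)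
    (hb : 0 ≤ b) (hb' : b ≤ 1/2) (hst : s + t = 1 - γ) (hs1 : s ≤ 1) (ht1 : t ≤ 1) :
    max 0 (max ((1-a)*s + b*t) (a*s + (1-b)*t)) ≤
      (max (max ((1-a) - γ*b) 0) (max ((1-b) - γ*a) 0)) * max 0 (max s t) := by
  have ht' : t = 1 - γ - s := by linarith
  subst ht'
  set M := max (max ((1-a) - γ*b) 0) (max ((1-b) - γ*a) 0) with hM
  have hM0 : 0 ≤ M := le_trans (le_max_right _ 0) (le_max_left _ _)
  have hm0 : 0 ≤ max 0 (max s (1 - γ - s)) := le_max_left _ _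
  refine max_le (mul_nonneg hM0 hm0) (max_le ?_ ?_)
  · rcases le_or_gt s 0 with hs | hs
    · have h : (1-a)*s + b*(1-γ-s) ≤ 0 := by
        nlinarith [mul_nonneg (show (0:ℝ) ≤ 1-a-b by linarith) (neg_nonneg.mpr hs),
          mul_nonneg hb (show (0:ℝ) ≤ γ-1 by linarith)]
      exact h.trans (mul_nonneg hM0 hm0)
    · have h1 : (1-a)*s + b*(1-γ-s) ≤ ((1-a) - γ*b) * s := by
        nlinarith [mul_nonneg hb (mul_nonneg (show (0:ℝ) ≤ γ-1 by linarith)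
          (show (0:ℝ) ≤ 1-s by linarith))]
      have h2 : ((1-a) - γ*b) * s ≤ M * s :=
        mul_le_mul_of_nonneg_right (le_trans (le_max_left _ 0) (le_max_left _ _)) hs.le
      have h3 : M * s ≤ M * max 0 (max s (1-γ-s)) :=
        mul_le_mul_of_nonneg_left (le_trans (le_max_left _ _) (le_max_right _ _)) hM0
      linarith
  · rcases le_or_gt (1-γ-s) 0 with ht | ht
    · have h : a*s + (1-b)*(1-γ-s) ≤ 0 := by
        nlinarith [mul_nonneg (show (0:ℝ) ≤ 1-b-a by linarith) (show (0:ℝ) ≤ γ-1+s by linarith),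
          mul_nonneg ha (show (0:ℝ) ≤ γ-1 by linarith)]
      exact h.trans (mul_nonneg hM0 hm0)
    · have h1 : a*s + (1-b)*(1-γ-s) ≤ ((1-b) - γ*a) * (1-γ-s) := by
        nlinarith [mul_nonneg ha (mul_nonneg (show (0:ℝ) ≤ γ-1 by linarith)
          (show (0:ℝ) ≤ s+γ by linarith))]
      have h2 : ((1-b) - γ*a) * (1-γ-s) ≤ M * (1-γ-s) :=
        mul_le_mul_of_nonneg_right (le_trans (le_max_left _ 0) (le_max_right _ _)) ht.le
      have h3 : M * (1-γ-s) ≤ M * max 0 (max s (1-γ-s)) :=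
        mul_le_mul_of_nonneg_left (le_trans (le_max_right _ _) (le_max_right _ _)) hM0
      linarith

end aux

section aux2
variable (a b : ℝ) (K : Fin 2 → Measure (Fin 2))
variable (hK : K = fun i =>
      if i = 0 then
        ENNReal.ofReal (1 - a) • Measure.dirac 0 + ENNReal.ofReal a • Measure.dirac 1
      else
        ENNReal.ofReal b • Measure.dirac 0 + ENNReal.ofReal (1 - b) • Measure.dirac 1)

include hK

lemma K00 : K 0 {0} = ENNReal.ofReal (1 - a) := by
  subst hK; simp [Measure.dirac_apply]

lemma K01 : K 0 {1} = ENNReal.ofReal a := by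
  subst hK; simp [Measure.dirac_apply]

lemma K10 : K 1 {0} = ENNReal.ofReal b := by
  subst hK; simp [Measure.dirac_apply]

lemma K11 : K 1 {1} = ENNReal.ofReal (1 - b) := by
  subst hK; simp [Measure.dirac_apply]

lemma K_univ (ha : 0 ≤ a) (ha' : a ≤ 1) (hb : 0 ≤ b) (hb' : b ≤ 1) (i : Fin 2) :
    K i Set.univ = 1 := by
  subst hK
  fin_cases i <;>
  · simp only [Fin.isValue, Fin.zero_eta, Fin.mk_one, if_true, if_false, one_ne_zero,
      Measure.add_apply, Measure.smul_apply, measure_univ, smul_eq_mul, mul_one,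
      reduceIte]
    rw [← ENNReal.ofReal_add (by linarith) (by linarith)]
    norm_num

lemma bind_prob (ha : 0 ≤ a) (ha' : a ≤ 1) (hb : 0 ≤ b) (hb' : b ≤ 1)
    (μ : Measure (Fin 2)) [IsProbabilityMeasure μ] :
    IsProbabilityMeasure (μ.bind K) := by
  constructor
  rw [Measure.bind_apply MeasurableSet.univ (measurable_of_countable K).aemeasurable]
  have h : ∀ i, K i Set.univ = 1 := K_univ a b K hK ha ha' hb hb'
  simp [h]

lemma bind_val0 (ha : 0 ≤ a) (ha' : a ≤ 1) (hb : 0 ≤ b) (hb' : b ≤ 1)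
    (μ : Measure (Fin 2)) [IsProbabilityMeasure μ] :
    ((μ.bind K) {0}).toReal = (1 - a) * (μ {0}).toReal + b * (μ {1}).toReal := by
  rw [Measure.bind_apply (by trivial) (measurable_of_countable K).aemeasurable,
    lintegral_fintype, Fin.sum_univ_two, K00 a b K hK, K10 a b K hK,
    ENNReal.toReal_add (by finiteness) (by finiteness), ENNReal.toReal_mul,
    ENNReal.toReal_mul, ENNReal.toReal_ofReal (by linarith), ENNReal.toReal_ofReal hb]

lemma bind_val1 (ha : 0 ≤ a) (ha' : a ≤ 1) (hb : 0 ≤ b) (hb' : b ≤ 1)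
    (μ : Measure (Fin 2)) [IsProbabilityMeasure μ] :
    ((μ.bind K) {1}).toReal = a * (μ {0}).toReal + (1 - b) * (μ {1}).toReal := by
  rw [Measure.bind_apply (by trivial) (measurable_of_countable K).aemeasurable,
    lintegral_fintype, Fin.sum_univ_two, K01 a b K hK, K11 a b K hK,
    ENNReal.toReal_add (by finiteness) (by finiteness), ENNReal.toReal_mul,
    ENNReal.toReal_mul, ENNReal.toReal_ofReal ha, ENNReal.toReal_ofReal (by linarith)]

lemma egamma_bind_le {γ : ℝ} (hγ : 1 ≤ γ) (ha : 0 ≤ a) (ha' : a ≤ 1/2)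
    (hb : 0 ≤ b) (hb' : b ≤ 1/2) (μ ν : Measure (Fin 2))
    [IsProbabilityMeasure μ] [IsProbabilityMeasure ν] :
    Egamma γ (μ.bind K) (ν.bind K) ≤
      (max (max ((1-a) - γ*b) 0) (max ((1-b) - γ*a) 0)) * Egamma γ μ ν := by
  haveI h1 := bind_prob a b K hK ha (by linarith) hb (by linarith) μ
  haveI h2 := bind_prob a b K hK ha (by linarith) hb (by linarith) ν
  have hp := fin2_toReal_sum μ
  have hq := fin2_toReal_sum ν
  have hp0 : 0 ≤ (μ ({0} : Set (Fin 2))).toReal := ENNReal.toReal_nonneg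
  have hp1 : 0 ≤ (μ ({1} : Set (Fin 2))).toReal := ENNReal.toReal_nonneg
  have hq0 : 0 ≤ (ν ({0} : Set (Fin 2))).toReal := ENNReal.toReal_nonneg
  have hq1 : 0 ≤ (ν ({1} : Set (Fin 2))).toReal := ENNReal.toReal_nonneg
  rw [egamma_fin2 hγ (μ.bind K) (ν.bind K), egamma_fin2 hγ μ ν,
    bind_val0 a b K hK ha (by linarith) hb (by linarith) μ,
    bind_val0 a b K hK ha (by linarith) hb (by linarith) ν,
    bind_val1 a b K hK ha (by linarith) hb (by linarith) μ,
    bind_val1 a b K hK ha (by linarith) hb (by linarith) ν]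
  set p0 := (μ ({0} : Set (Fin 2))).toReal
  set p1 := (μ ({1} : Set (Fin 2))).toReal
  set q0 := (ν ({0} : Set (Fin 2))).toReal
  set q1 := (ν ({1} : Set (Fin 2))).toReal
  have e1 : (1-a)*p0 + b*p1 - γ*((1-a)*q0 + b*q1)
      = (1-a)*(p0 - γ*q0) + b*(p1 - γ*q1) := by ring
  have e2 : a*p0 + (1-b)*p1 - γ*(a*q0 + (1-b)*q1)
      = a*(p0 - γ*q0) + (1-b)*(p1 - γ*q1) := by ring
  rw [e1, e2]
  refine contraction_core γ a b _ _ hγ ha ha' hb hb' ?_ ?_ ?_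
  · linear_combination hp - γ * hq
  · nlinarith [mul_nonneg (show (0:ℝ) ≤ γ by linarith) hq0]
  · nlinarith [mul_nonneg (show (0:ℝ) ≤ γ by linarith) hq1]

end aux2

/-- For `a, b ∈ [0, 1/2]`, the binary channel `K^{a,b}` on `{0,1}`
(with `K(0) = (1−a, a)` and `K(1) = (b, 1−b)`) satisfies, for every `γ ≥ 1`,
`η_γ(K^{a,b}) = max{((1−a) − γb)⁺, ((1−b) − γa)⁺}`; in particular
`η₁(K^{a,b}) = 1 − a − b`. -/
theorem etaGamma_binary_channel (a b : ℝ)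
    (ha : a ∈ Set.Icc (0 : ℝ) (1 / 2)) (hb : b ∈ Set.Icc (0 : ℝ) (1 / 2))
    (K : Fin 2 → Measure (Fin 2))
    (hK : K = fun i =>
      if i = 0 then
        ENNReal.ofReal (1 - a) • Measure.dirac 0 + ENNReal.ofReal a • Measure.dirac 1
      else
        ENNReal.ofReal b • Measure.dirac 0 + ENNReal.ofReal (1 - b) • Measure.dirac 1) :
    (∀ γ : ℝ, 1 ≤ γ →
        etaGamma γ K = max (max ((1 - a) - γ * b) 0) (max ((1 - b) - γ * a) 0)) ∧
      etaGamma 1 K = 1 - a - b := by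
  obtain ⟨ha0, ha2⟩ := ha
  obtain ⟨hb0, hb2⟩ := hb
  have main : ∀ γ : ℝ, 1 ≤ γ →
      etaGamma γ K = max (max ((1 - a) - γ * b) 0) (max ((1 - b) - γ * a) 0) := by
    intro γ hγ
    haveI hK0 : IsProbabilityMeasure (K 0) :=
      ⟨K_univ a b K hK ha0 (by linarith) hb0 (by linarith) 0⟩
    haveI hK1 : IsProbabilityMeasure (K 1) :=
      ⟨K_univ a b K hK ha0 (by linarith) hb0 (by linarith) 1⟩
    have hd01 : Egamma γ (Measure.dirac (0 : Fin 2)) (Measure.dirac (1 : Fin 2)) = 1 := by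
      rw [egamma_fin2 hγ]
      norm_num [Measure.dirac_apply]
      linarith
    have hd10 : Egamma γ (Measure.dirac (1 : Fin 2)) (Measure.dirac (0 : Fin 2)) = 1 := by
      rw [egamma_fin2 hγ]
      norm_num [Measure.dirac_apply]
      linarith
    have hEK01 : Egamma γ (K 0) (K 1) = max ((1 - a) - γ * b) 0 := by
      rw [egamma_fin2 hγ, K00 a b K hK, K01 a b K hK, K10 a b K hK, K11 a b K hK,
        ENNReal.toReal_ofReal (by linarith), ENNReal.toReal_ofReal ha0,
        ENNReal.toReal_ofReal hb0, ENNReal.toReal_ofReal (by linarith)]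
      exact max_collapse _ _ (by nlinarith)
    have hEK10 : Egamma γ (K 1) (K 0) = max ((1 - b) - γ * a) 0 := by
      rw [egamma_fin2 hγ, K00 a b K hK, K01 a b K hK, K10 a b K hK, K11 a b K hK,
        ENNReal.toReal_ofReal hb0, ENNReal.toReal_ofReal (show (0:ℝ) ≤ 1 - a by linarith),
        ENNReal.toReal_ofReal (show (0:ℝ) ≤ 1 - b by linarith), ENNReal.toReal_ofReal ha0,
        max_comm (b - γ * (1 - a))]
      exact max_collapse _ _ (by nlinarith)
    set T := {p : Measure (Fin 2) × Measure (Fin 2) //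
      IsProbabilityMeasure p.1 ∧ IsProbabilityMeasure p.2 ∧ Egamma γ p.1 p.2 ≠ 0} with hT
    set f : T → ℝ := fun p =>
      Egamma γ (p.1.1.bind K) (p.1.2.bind K) / Egamma γ p.1.1 p.1.2 with hf
    have hx1 : ((Measure.dirac (0 : Fin 2), Measure.dirac (1 : Fin 2)) :
        Measure (Fin 2) × Measure (Fin 2)) ∈
        {p : Measure (Fin 2) × Measure (Fin 2) |
          IsProbabilityMeasure p.1 ∧ IsProbabilityMeasure p.2 ∧ Egamma γ p.1 p.2 ≠ 0} :=
      ⟨inferInstance, inferInstance, by rw [hd01]; norm_num⟩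
    have hx2 : ((Measure.dirac (1 : Fin 2), Measure.dirac (0 : Fin 2)) :
        Measure (Fin 2) × Measure (Fin 2)) ∈
        {p : Measure (Fin 2) × Measure (Fin 2) |
          IsProbabilityMeasure p.1 ∧ IsProbabilityMeasure p.2 ∧ Egamma γ p.1 p.2 ≠ 0} :=
      ⟨inferInstance, inferInstance, by rw [hd10]; norm_num⟩
    set x1 : T := ⟨_, hx1⟩ with hx1d
    set x2 : T := ⟨_, hx2⟩ with hx2d
    haveI : Nonempty T := ⟨x1⟩
    have hub : ∀ p : T, f p ≤ max (max ((1 - a) - γ * b) 0) (max ((1 - b) - γ * a) 0) := by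
      rintro ⟨⟨μ, ν⟩, hμ, hν, hne⟩
      haveI := hμ
      haveI := hν
      have hd0 : 0 ≤ Egamma γ μ ν := by
        rw [egamma_fin2 hγ]; exact le_max_left _ _
      have hdpos : 0 < Egamma γ μ ν := lt_of_le_of_ne hd0 (Ne.symm hne)
      show Egamma γ (μ.bind K) (ν.bind K) / Egamma γ μ ν ≤ _
      rw [div_le_iff₀ hdpos]
      exact egamma_bind_le a b K hK hγ ha0 ha2 hb0 hb2 μ ν
    have hbdd : BddAbove (Set.range f) := by
      refine ⟨max (max ((1 - a) - γ * b) 0) (max ((1 - b) - γ * a) 0), ?_⟩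
      rintro x ⟨p, rfl⟩
      exact hub p
    have hetaf : etaGamma γ K = ⨆ p : T, f p := rfl
    rw [hetaf]
    apply le_antisymm
    · exact ciSup_le hub
    · have hdb : ∀ i : Fin 2, (Measure.dirac i).bind K = K i := fun i =>
        Measure.dirac_bind (measurable_of_countable K) i
      have h1 : f x1 = max ((1 - a) - γ * b) 0 := by
        show Egamma γ ((Measure.dirac 0).bind K) ((Measure.dirac 1).bind K) /
          Egamma γ (Measure.dirac 0) (Measure.dirac 1) = _
        rw [hdb 0, hdb 1, hd01, div_one, hEK01]
      have h2 : f x2 = max ((1 - b) - γ * a) 0 := by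
        show Egamma γ ((Measure.dirac 1).bind K) ((Measure.dirac 0).bind K) /
          Egamma γ (Measure.dirac 1) (Measure.dirac 0) = _
        rw [hdb 1, hdb 0, hd10, div_one, hEK10]
      refine max_le ?_ ?_
      · rw [← h1]; exact le_ciSup hbdd x1
      · rw [← h2]; exact le_ciSup hbdd x2
  refine ⟨main, ?_⟩
  rw [main 1 le_rfl, one_mul, one_mul,
    max_eq_left (show (0:ℝ) ≤ 1 - a - b by linarith),
    max_eq_left (show (0:ℝ) ≤ 1 - b - a by linarith),
    show (1 : ℝ) - b - a = 1 - a - b from by ring, max_self]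
end
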